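/- Many-layers regime, unscaled (first claim of Theorem 2): if |x| = |θ^1| = ⋯ = |θ^l| = 1.5, then for every k ∈ {1,…,l}, the magnitude of the partial derivative of h(y − g(x)) with respect to θ^k is at most |d| / 2^{l−k+1}, where g is the chain of l one-parameter tanh neurons and d = h'(y − g(x)). -/

import Mathlib

open Real

lemma tanh_formula (t : ℝ) : Real.tanh t = 1 - 2 / (Real.exp (2*t) + 1) := by
  rw [Real.tanh_eq_sinh_div_cosh, Real.sinh_eq, Real.cosh_eq]
  have h1 : Real.exp (2*t) = Real.exp t * Real.exp t := by
    rw [← Real.exp_add]; ring_nf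
  have h2 : Real.exp (-t) = (Real.exp t)⁻¹ := Real.exp_neg t
  have h3 : Real.exp t ≠ 0 := (Real.exp_pos t).ne'
  have h4 : (0:ℝ) < Real.exp (2*t) + 1 := by positivity
  rw [h1, h2]
  field_simp
  ring

lemma abs_tanh_le_one (t : ℝ) : |Real.tanh t| ≤ 1 := by
  rw [tanh_formula]
  have h4 : (0:ℝ) < Real.exp (2*t) + 1 := by positivity
  rw [abs_le]
  constructor
  · have : 2 / (Real.exp (2*t) + 1) ≤ 2 := by
      rw [div_le_iff₀ h4]; nlinarith [Real.exp_pos (2*t)]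
    linarith
  · have : 0 < 2 / (Real.exp (2*t) + 1) := by positivity
    linarith

lemma tanh_ge_of (t : ℝ) (ht : 1.23 ≤ t) : 0.82 ≤ Real.tanh t := by
  rw [tanh_formula]
  have hE : (10.12 : ℝ) ≤ Real.exp (2*t) := by
    have h1 : Real.exp 2.46 ≤ Real.exp (2*t) := Real.exp_le_exp.2 (by linarith)
    have h2 : Real.exp 2.46 = Real.exp 1 * Real.exp 1 * Real.exp 0.46 := by
      rw [← Real.exp_add, ← Real.exp_add]; norm_num
    have h3 : (2.7182818283:ℝ) < Real.exp 1 := Real.exp_one_gt_d9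
    have h4 : (1.46:ℝ) ≤ Real.exp 0.46 := by
      have := Real.add_one_le_exp (0.46:ℝ); linarith
    nlinarith [Real.exp_pos (1:ℝ)]
  have h4 : (0:ℝ) < Real.exp (2*t) + 1 := by positivity
  have : 2 / (Real.exp (2*t) + 1) ≤ 0.18 := by
    rw [div_le_iff₀ h4]; nlinarith
  linarith

lemma abs_tanh_ge (z : ℝ) (hz : 1.23 ≤ |z|) : 0.82 ≤ |Real.tanh z| := by
  rcases abs_cases z with ⟨he, _⟩ | ⟨he, _⟩
  · rw [he] at hz
    have := tanh_ge_of z hz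
    calc (0.82:ℝ) ≤ Real.tanh z := this
      _ ≤ |Real.tanh z| := le_abs_self _
  · rw [he] at hz
    have := tanh_ge_of (-z) hz
    rw [Real.tanh_neg] at this
    calc (0.82:ℝ) ≤ -Real.tanh z := this
      _ ≤ |Real.tanh z| := neg_le_abs _

lemma tanh_hasDerivAt (x : ℝ) : HasDerivAt Real.tanh (1 - Real.tanh x ^ 2) x := by
  have h := (Real.hasDerivAt_sinh x).div (Real.hasDerivAt_cosh x) (Real.cosh_pos x).ne'
  have heq : (Real.cosh x * Real.cosh x - Real.sinh x * Real.sinh x) / Real.cosh x ^ 2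
      = 1 - Real.tanh x ^ 2 := by
    rw [Real.tanh_eq_sinh_div_cosh]
    have hc := (Real.cosh_pos x).ne'
    have := Real.cosh_sq_sub_sinh_sq x
    field_simp
  rw [heq] at h
  exact h.congr_of_eventuallyEq
    (Filter.Eventually.of_forall fun y => Real.tanh_eq_sinh_div_cosh y)

/-- The chain of one-parameter `tanh` neurons: `chain θ l x = tanh (θ l * ⋯ tanh (θ 1 * x))`. -/
noncomputable def chain (θ : ℕ → ℝ) : ℕ → ℝ → ℝ
  | 0, x => x
  | n + 1, x => Real.tanh (θ (n + 1) * chain θ n x)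

lemma chain_congr (θ₁ θ₂ : ℕ → ℝ) (x : ℝ) (n : ℕ)
    (h : ∀ i, 1 ≤ i → i ≤ n → θ₁ i = θ₂ i) : chain θ₁ n x = chain θ₂ n x := by
  induction n with
  | zero => rfl
  | succ m ih =>
    simp only [chain]
    rw [h (m+1) (by omega) le_rfl, ih (fun i h1 h2 => h i h1 (by omega))]

theorem many_layers_regime_unscaled (l k : ℕ) (hk1 : 1 ≤ k) (hkl : k ≤ l)
    (θ : ℕ → ℝ) (x y : ℝ) (hx : |x| = 1.5)
    (hθ : ∀ i, 1 ≤ i → i ≤ l → |θ i| = 1.5)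
    (h : ℝ → ℝ) (hh : Differentiable ℝ h) :
    |deriv (fun u : ℝ => h (y - chain (Function.update θ k u) l x)) (θ k)| ≤
      |deriv h (y - chain θ l x)| / 2 ^ (l - k + 1) := by
  have hub : ∀ i, |chain θ i x| ≤ 1.5 := by
    intro i
    cases i with
    | zero => rw [show chain θ 0 x = x from rfl, hx]
    | succ m =>
        calc |chain θ (m+1) x| ≤ 1 := abs_tanh_le_one _
          _ ≤ 1.5 := by norm_num
  have hlb : ∀ i, i ≤ l → (0.82:ℝ) ≤ |chain θ i x| := by
    intro i
    induction i with
    | zero => intro _; rw [show chain θ 0 x = x from rfl, hx]; norm_num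
    | succ m ih =>
      intro hml
      have h1 : (0.82:ℝ) ≤ |chain θ m x| := ih (by omega)
      have h2 : |θ (m+1)| = 1.5 := hθ (m+1) (by omega) hml
      apply abs_tanh_ge
      rw [abs_mul, h2]
      nlinarith
  have hfac : ∀ i, 1 ≤ i → i ≤ l → |1 - (chain θ i x)^2| ≤ 1/3 := by
    intro i hi1 hi2
    obtain ⟨m, rfl⟩ : ∃ m, i = m + 1 := ⟨i - 1, by omega⟩
    have ha : |chain θ (m+1) x| ≤ 1 := abs_tanh_le_one _
    have hb : (0.82:ℝ) ≤ |chain θ (m+1) x| := hlb _ hi2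
    rw [abs_le]
    constructor <;> nlinarith [sq_abs (chain θ (m+1) x), abs_nonneg (chain θ (m+1) x)]
  have key : ∀ n, k ≤ n → n ≤ l → ∃ D, HasDerivAt
      (fun u : ℝ => chain (Function.update θ k u) n x) D (θ k) ∧
      |D| ≤ (1/2:ℝ)^(n - k + 1) := by
    intro n
    induction n with
    | zero => intro hkn _; omega
    | succ m ih =>
      intro hkm hml
      rcases eq_or_lt_of_le hkm with heq | hlt
      · -- base case k = m+1
        subst heq
        have hfun : (fun u : ℝ => chain (Function.update θ (m+1) u) (m+1) x)
            = fun u : ℝ => Real.tanh (u * chain θ m x) := by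
          funext u
          show Real.tanh (Function.update θ (m+1) u (m+1) * chain (Function.update θ (m+1) u) m x) = _
          rw [Function.update_self]
          congr 1
          rw [chain_congr (Function.update θ (m+1) u) θ x m
            (fun i h1 h2 => Function.update_of_ne (by omega) _ _)]
        refine ⟨(1 - Real.tanh (θ (m+1) * chain θ m x)^2) * chain θ m x, ?_, ?_⟩
        · rw [hfun]
          have hd := (tanh_hasDerivAt (θ (m+1) * chain θ m x)).comp (θ (m+1))
            ((hasDerivAt_id (θ (m+1))).mul_const (chain θ m x))
          refine hd.congr_deriv ?_
          ring
        · have htv : Real.tanh (θ (m+1) * chain θ m x) = chain θ (m+1) x := rfl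
          rw [abs_mul, htv]
          have h1 := hfac (m+1) (by omega) (by omega)
          have h2 := hub m
          have h3 : m + 1 - (m+1) + 1 = 1 := by omega
          rw [h3]
          nlinarith [abs_nonneg (1 - (chain θ (m+1) x)^2), abs_nonneg (chain θ m x)]
      · -- step case k ≤ m
        obtain ⟨D, hD, hDb⟩ := ih (by omega) (by omega)
        have hfun : (fun u : ℝ => chain (Function.update θ k u) (m+1) x)
            = fun u : ℝ => Real.tanh (θ (m+1) * chain (Function.update θ k u) m x) := by
          funext u
          show Real.tanh (Function.update θ k u (m+1) * _) = _
          rw [Function.update_of_ne (by omega)]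
        have hupd : Function.update θ k (θ k) = θ := Function.update_eq_self k θ
        refine ⟨(1 - Real.tanh (θ (m+1) * chain θ m x)^2) * (θ (m+1) * D), ?_, ?_⟩
        · rw [hfun]
          have hd := (tanh_hasDerivAt (θ (m+1) * chain (Function.update θ k (θ k)) m x)).comp
            (θ k) (hD.const_mul (θ (m+1)))
          rw [hupd] at hd
          exact hd
        · have htv : Real.tanh (θ (m+1) * chain θ m x) = chain θ (m+1) x := rfl
          rw [abs_mul, abs_mul, htv]
          have h1 := hfac (m+1) (by omega) hml
          have h2 : |θ (m+1)| = 1.5 := hθ (m+1) (by omega) hml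
          have h3 : m + 1 - k + 1 = (m - k + 1) + 1 := by omega
          have h4 : (1/2:ℝ)^(m - k + 1 + 1) = (1/2:ℝ)^(m - k + 1) * (1/2) := pow_succ _ _
          rw [h2, h3, h4]
          have hDn := abs_nonneg D
          nlinarith [abs_nonneg (1 - (chain θ (m+1) x)^2), pow_nonneg (by norm_num : (0:ℝ) ≤ 1/2) (m - k + 1)]
  obtain ⟨D, hD, hDb⟩ := key l hkl le_rfl
  have hupd : Function.update θ k (θ k) = θ := Function.update_eq_self k θ
  have hinner : HasDerivAt (fun u : ℝ => y - chain (Function.update θ k u) l x) (-D) (θ k) := by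
    have := (hasDerivAt_const (θ k) y).sub hD
    rw [zero_sub] at this; exact this
  have houter : HasDerivAt h (deriv h (y - chain θ l x)) (y - chain (Function.update θ k (θ k)) l x) := by
    rw [hupd]; exact (hh _).hasDerivAt
  have hcomp : HasDerivAt (fun u : ℝ => h (y - chain (Function.update θ k u) l x))
      (deriv h (y - chain θ l x) * -D) (θ k) := houter.comp (θ k) hinner
  rw [hcomp.deriv, abs_mul, abs_neg]
  calc |deriv h (y - chain θ l x)| * |D|
      ≤ |deriv h (y - chain θ l x)| * (1/2:ℝ)^(l - k + 1) :=
        mul_le_mul_of_nonneg_left hDb (abs_nonneg _)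
    _ = |deriv h (y - chain θ l x)| / 2 ^ (l - k + 1) := by
        rw [div_pow, one_pow, mul_one_div]
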